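/- The function LRF is respectful: for all binary relations R and S on the states, if R ⊆ S and R ⤳ S, then LRF(R) ⊆ LRF(S) and LRF(R) ⤳ LRF(S). -/

import Mathlib

universe u v

/-- `Progress Tr R S` means relation `R` progresses to relation `S`
in the labelled transition system with transition relation `Tr`. -/
def Progress {St : Type u} {Δ : Type v} (Tr : St → Δ → St → Prop)
    (R S : Set (St × St)) : Prop :=
  ∀ p q, (p, q) ∈ R →
    (∀ a p', Tr p a p' → ∃ q', Tr q a q' ∧ (p', q') ∈ S) ∧
    (∀ a q', Tr q a q' → ∃ p', Tr p a p' ∧ (p', q') ∈ S)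

/-- A function on relations is respectful if whenever `R ⊆ S` and `R ⤳ S`,
also `F R ⊆ F S` and `F R ⤳ F S`. -/
def Respectful {St : Type u} {Δ : Type v} (Tr : St → Δ → St → Prop)
    (F : Set (St × St) → Set (St × St)) : Prop :=
  ∀ R S : Set (St × St), R ⊆ S → Progress Tr R S →
    F R ⊆ F S ∧ Progress Tr (F R) (F S)

/-- Milner's stratification of bisimilarity: `∼₀ = univ`,
`∼_{α+1} = ⋃ {X | X ⤳ ∼_α}`, `∼_λ = ⋂_{β<λ} ∼_β` for limits. -/
noncomputable def Strat {St : Type u} {Δ : Type v} (Tr : St → Δ → St → Prop)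
    (α : Ordinal.{w}) : Set (St × St) :=
  Ordinal.limitRecOn α
    Set.univ
    (fun _ ih => ⋃₀ {X | Progress Tr X ih})
    (fun o _ ih => ⋂ (β : Ordinal.{w}) (h : β < o), ih β h)

/-- `LRF R = ⋂ {∼_α | R ⊆ ∼_α}`. -/
noncomputable def LRF {St : Type u} {Δ : Type v} (Tr : St → Δ → St → Prop)
    (R : Set (St × St)) : Set (St × St) :=
  ⋂ (α : Ordinal.{u}) (_ : R ⊆ Strat.{u, v, u} Tr α), Strat.{u, v, u} Tr α

universe w

section Lemmas
variable {St : Type u} {Δ : Type v} (Tr : St → Δ → St → Prop)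

lemma progress_mono {R R' S S' : Set (St × St)} (hR : R' ⊆ R) (hS : S ⊆ S')
    (h : Progress Tr R S) : Progress Tr R' S' := by
  intro p q hpq
  obtain ⟨h1, h2⟩ := h p q (hR hpq)
  exact ⟨fun a p' ht => (h1 a p' ht).imp fun q' ⟨hq, hq'⟩ => ⟨hq, hS hq'⟩,
         fun a q' ht => (h2 a q' ht).imp fun p' ⟨hp, hp'⟩ => ⟨hp, hS hp'⟩⟩

lemma strat_zero : Strat.{u,v,w} Tr 0 = Set.univ :=
  Ordinal.limitRecOn_zero _ _ _

lemma strat_succ (α : Ordinal.{w}) :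
    Strat.{u,v,w} Tr (Order.succ α) = ⋃₀ {X | Progress Tr X (Strat.{u,v,w} Tr α)} :=
  Ordinal.limitRecOn_succ _ _ _ _

lemma strat_limit (γ : Ordinal.{w}) (h : Order.IsSuccLimit γ) :
    Strat.{u,v,w} Tr γ = ⋂ (β : Ordinal.{w}) (_ : β < γ), Strat.{u,v,w} Tr β :=
  Ordinal.limitRecOn_limit _ _ _ _ h

lemma strat_succ_progress (α : Ordinal.{w}) :
    Progress Tr (Strat.{u,v,w} Tr (Order.succ α)) (Strat.{u,v,w} Tr α) := by
  rw [strat_succ]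
  intro p q hpq
  obtain ⟨X, hX, hpqX⟩ := hpq
  exact hX p q hpqX

lemma strat_absorb : ∀ γ : Ordinal.{w}, ∀ X : Set (St × St),
    Progress Tr X (Strat.{u,v,w} Tr γ) → X ⊆ Strat.{u,v,w} Tr γ := by
  intro γ
  induction γ using Ordinal.induction with
  | _ γ IH =>
    intro X hX
    rcases Ordinal.zero_or_succ_or_isSuccLimit γ with h0 | ⟨δ, rfl⟩ | hlim
    · subst h0; rw [strat_zero]; exact Set.subset_univ X
    · rw [strat_succ]
      intro x hx
      refine Set.mem_sUnion.2 ⟨X, ?_, hx⟩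
      have hsub : Strat.{u,v,w} Tr (Order.succ δ) ⊆ Strat.{u,v,w} Tr δ :=
        IH δ (Order.lt_succ δ) _ (strat_succ_progress Tr δ)
      exact progress_mono Tr (subset_refl X) hsub hX
    · rw [strat_limit Tr γ hlim]
      refine Set.subset_iInter₂ fun β hβ => ?_
      refine IH β hβ X (progress_mono Tr (subset_refl X) ?_ hX)
      rw [strat_limit Tr γ hlim]
      exact Set.iInter₂_subset β hβ

lemma strat_succ_subset (α : Ordinal.{w}) :
    Strat.{u,v,w} Tr (Order.succ α) ⊆ Strat.{u,v,w} Tr α :=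
  strat_absorb Tr α _ (strat_succ_progress Tr α)

lemma strat_antitone : ∀ β α : Ordinal.{w}, α ≤ β →
    Strat.{u,v,w} Tr β ⊆ Strat.{u,v,w} Tr α := by
  intro β
  induction β using Ordinal.induction with
  | _ β IH =>
    intro α hαβ
    rcases eq_or_lt_of_le hαβ with rfl | hlt
    · exact subset_refl _
    rcases Ordinal.zero_or_succ_or_isSuccLimit β with h0 | ⟨δ, rfl⟩ | hlim
    · subst h0; exact absurd hlt (by simp : ¬ α < 0)
    · exact (strat_succ_subset Tr δ).trans
        (IH δ (Order.lt_succ δ) α (Order.lt_succ_iff.mp hlt))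
    · rw [strat_limit Tr β hlim]
      exact Set.iInter₂_subset α hlt

lemma strat_global (γ : Ordinal.{w})
    (h : Progress Tr (Strat.{u,v,w} Tr γ) (Strat.{u,v,w} Tr γ)) :
    ∀ α : Ordinal.{w}, Strat.{u,v,w} Tr γ ⊆ Strat.{u,v,w} Tr α := by
  intro α
  induction α using Ordinal.induction with
  | _ α IH =>
    rcases Ordinal.zero_or_succ_or_isSuccLimit α with h0 | ⟨δ, rfl⟩ | hlim
    · subst h0; rw [strat_zero]; exact Set.subset_univ _
    · rw [strat_succ]
      exact fun x hx => Set.mem_sUnion.2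
        ⟨Strat.{u,v,w} Tr γ,
         progress_mono Tr (subset_refl _) (IH δ (Order.lt_succ δ)) h, hx⟩
    · rw [strat_limit Tr α hlim]
      exact Set.subset_iInter₂ fun β hβ => IH β hβ

lemma strat_stab : ∃ γ : Ordinal.{u},
    Progress Tr (Strat.{u,v,u} Tr γ) (Strat.{u,v,u} Tr γ) := by
  by_contra hc
  push_neg at hc
  have hne : ∀ γ : Ordinal.{u}, Strat.{u,v,u} Tr (Order.succ γ) ≠ Strat.{u,v,u} Tr γ := by
    intro γ heq
    exact hc γ (heq ▸ strat_succ_progress Tr γ)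
  have hsa : StrictAnti (fun γ : Ordinal.{u} => Strat.{u,v,u} Tr γ) := by
    intro α β hlt
    have h1 : Strat.{u,v,u} Tr β ⊆ Strat.{u,v,u} Tr (Order.succ α) :=
      strat_antitone Tr β (Order.succ α) (Order.succ_le_of_lt hlt)
    exact lt_of_le_of_lt h1 (lt_of_le_of_ne (strat_succ_subset Tr α) (hne α))
  exact not_small_ordinal.{u,u} (small_of_injective hsa.injective)
end Lemmas

theorem lrf_respectful {St : Type u} {Δ : Type v} (Tr : St → Δ → St → Prop) :
    Respectful Tr (LRF Tr) := by
  intro R S hRS hProg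
  have hsub : LRF Tr R ⊆ LRF Tr S := by
    refine Set.subset_iInter₂ fun α hα => ?_
    exact Set.iInter₂_subset α (hRS.trans hα)
  refine ⟨hsub, ?_⟩
  by_cases hall : ∀ α : Ordinal.{u}, S ⊆ Strat.{u,v,u} Tr α
  · obtain ⟨γ, hγ⟩ := strat_stab Tr
    have hLS : LRF Tr S = Strat.{u,v,u} Tr γ := by
      apply subset_antisymm
      · exact Set.iInter₂_subset γ (hall γ)
      · exact Set.subset_iInter₂ fun α _ => strat_global Tr γ hγ α
    have hP : Progress Tr (LRF Tr S) (LRF Tr S) := by rw [hLS]; exact hγ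
    exact progress_mono Tr hsub (subset_refl _) hP
  · push_neg at hall
    set C : Set Ordinal.{u} := {α | ¬ S ⊆ Strat.{u,v,u} Tr α} with hC
    have hne : C.Nonempty := hall
    set β := Ordinal.lt_wf.min C hne with hβdef
    have hβC : β ∈ C := Ordinal.lt_wf.min_mem C hne
    have hlow : ∀ α < β, S ⊆ Strat.{u,v,u} Tr α := by
      intro α hα
      by_contra h
      exact Ordinal.lt_wf.not_lt_min C h hα
    rcases Ordinal.zero_or_succ_or_isSuccLimit β with h0 | ⟨γ, hγ⟩ | hlim
    · exact absurd (h0 ▸ (strat_zero Tr).symm ▸ Set.subset_univ S) hβC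
    · have hSγ : S ⊆ Strat.{u,v,u} Tr γ := hlow γ (hγ ▸ Order.lt_succ γ)
      -- LRF S = Strat γ
      have hLS : Strat.{u,v,u} Tr γ ⊆ LRF Tr S := by
        refine Set.subset_iInter₂ fun α hα => ?_
        have hαγ : α ≤ γ := by
          by_contra h
          push_neg at h
          have : β ≤ α := hγ ▸ Order.succ_le_of_lt h
          exact hβC (hα.trans (strat_antitone Tr α β this))
        exact strat_antitone Tr γ α hαγ
      -- R ⊆ Strat (succ γ)
      have hRsucc : R ⊆ Strat.{u,v,u} Tr (Order.succ γ) := by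
        rw [strat_succ]
        exact fun x hx => Set.mem_sUnion.2
          ⟨R, progress_mono Tr (subset_refl R) hSγ hProg, hx⟩
      have hLR : LRF Tr R ⊆ Strat.{u,v,u} Tr (Order.succ γ) :=
        Set.iInter₂_subset (Order.succ γ) hRsucc
      exact progress_mono Tr hLR hLS (strat_succ_progress Tr γ)
    · exfalso
      apply hβC
      rw [strat_limit Tr β hlim]
      exact Set.subset_iInter₂ fun α hα => hlow α hα
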